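/- With f₀ := H̄² and f_n := T(f_{n−1}) for n ≥ 1, the sequence f_n converges pointwise to H̄: for every x ∈ ℝ, lim_{n → ∞} f_n(x) = H̄(x). -/

import Mathlib

open MeasureTheory Real Set Filter

/-- The Logistic distribution function `H(x) = 1/(1+e^{-x})`. -/
noncomputable def H (x : ℝ) : ℝ := 1 / (1 + Real.exp (-x))

/-- The tail `H̄ := 1 - H` of the Logistic distribution function. -/
noncomputable def Hbar (x : ℝ) : ℝ := 1 - H x

/-- The set 𝔉 of continuous, non-increasing functions `f : ℝ → [0,1]`
with `H̄(x)² ≤ f(x) ≤ H̄(x)` for all `x`. -/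
def memF (f : ℝ → ℝ) : Prop :=
  (∀ x, f x ∈ Set.Icc (0:ℝ) 1) ∧ Continuous f ∧ Antitone f ∧
    ∀ x, Hbar x ^ 2 ≤ f x ∧ f x ≤ Hbar x

/-- The operator `T(f)(x) := H̄(x)² · exp(∫_{-x}^∞ f(s) ds)`. -/
noncomputable def T (f : ℝ → ℝ) (x : ℝ) : ℝ :=
  Hbar x ^ 2 * Real.exp (∫ s in Set.Ioi (-x), f s)

/-- The iterates `f₀ := H̄²`, `f_n := T(f_{n-1})`. -/
noncomputable def fseq : ℕ → ℝ → ℝ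
  | 0 => fun x => Hbar x ^ 2
  | n + 1 => T (fseq n)

lemma one_add_exp_pos (x : ℝ) : 0 < 1 + Real.exp x := by positivity
lemma H_inv_form : H = fun s : ℝ => (1 + Real.exp (-s))⁻¹ := funext fun _ => one_div _
lemma Hbar_eq (x : ℝ) : Hbar x = 1 / (1 + Real.exp x) := by
  have h1 := (one_add_exp_pos (-x)).ne'
  have h2 := (one_add_exp_pos x).ne'
  rw [Hbar, H]; field_simp; rw [Real.exp_neg]; field_simp; ring
lemma H_pos (x : ℝ) : 0 < H x := by rw [H]; positivity
lemma Hbar_pos (x : ℝ) : 0 < Hbar x := by rw [Hbar_eq]; positivity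
lemma H_lt_one (x : ℝ) : H x < 1 := by have := Hbar_pos x; rw [Hbar] at this; linarith
lemma Hbar_lt_one (x : ℝ) : Hbar x < 1 := by have := H_pos x; rw [Hbar]; linarith
lemma H_neg' (x : ℝ) : H (-x) = 1 - H x := by
  rw [show H (-x) = Hbar x by rw [Hbar_eq, H, neg_neg], Hbar]
lemma continuous_H : Continuous H := by
  rw [H_inv_form]
  exact (continuous_const.add (continuous_neg.rexp)).inv₀ fun x => (one_add_exp_pos (-x)).ne'
lemma continuous_Hbar : Continuous Hbar := continuous_const.sub continuous_H
lemma measurable_Hbar : Measurable Hbar := continuous_Hbar.measurable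
lemma hasDerivAt_H (x : ℝ) : HasDerivAt H (H x * Hbar x) x := by
  have h : HasDerivAt (fun y : ℝ => 1 + Real.exp (-y)) (-Real.exp (-x)) x := by
    simpa using (((hasDerivAt_id x).neg).exp.const_add 1)
  have h2 := h.inv (one_add_exp_pos (-x)).ne'
  rw [H_inv_form]
  convert h2 using 1
  iterate 3 rfl
  rw [Hbar_eq]
  have h1 := (one_add_exp_pos (-x)).ne'
  have h2' := (one_add_exp_pos x).ne'
  field_simp
  rw [Real.exp_neg]
  field_simp
  ring
lemma Hbar_le_exp_neg (s : ℝ) : Hbar s ≤ Real.exp (-s) := by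
  rw [Hbar_eq, Real.exp_neg, div_le_iff₀ (one_add_exp_pos s),
    inv_mul_eq_div, le_div_iff₀ (Real.exp_pos s)]
  nlinarith [Real.exp_pos s]
lemma integrableOn_Hbar (a : ℝ) : IntegrableOn Hbar (Ioi a) := by
  apply Integrable.mono (exp_neg_integrableOn_Ioi a one_pos)
    (continuous_Hbar.aestronglyMeasurable.restrict)
  filter_upwards with s
  rw [Real.norm_eq_abs, Real.norm_eq_abs, abs_of_nonneg (Hbar_pos s).le,
    abs_of_nonneg (Real.exp_pos _).le]
  simpa using Hbar_le_exp_neg s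
lemma integrableOn_of_le {f : ℝ → ℝ} (hf : Measurable f) (h0 : ∀ s, 0 ≤ f s)
    (h1 : ∀ s, f s ≤ Hbar s) (a : ℝ) : IntegrableOn f (Ioi a) := by
  apply Integrable.mono (integrableOn_Hbar a) (hf.aestronglyMeasurable.restrict)
  filter_upwards with s
  rw [Real.norm_eq_abs, Real.norm_eq_abs, abs_of_nonneg (h0 s),
    abs_of_nonneg (Hbar_pos s).le]
  exact h1 s
lemma tendsto_one_add_exp_neg : Tendsto (fun s : ℝ => 1 + Real.exp (-s)) atTop (nhds 1) := by
  have h : Tendsto (fun s : ℝ => Real.exp (-s)) atTop (nhds 0) :=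
    Real.tendsto_exp_atBot.comp tendsto_neg_atTop_atBot
  simpa using tendsto_const_nhds.add h
lemma tendsto_H : Tendsto H atTop (nhds 1) := by
  have := tendsto_one_add_exp_neg.inv₀ (by norm_num)
  simp only [inv_one] at this
  rw [H_inv_form]; exact this
lemma hasDerivAt_G (s : ℝ) :
    HasDerivAt (fun s : ℝ => -Real.log (1 + Real.exp (-s))) (Hbar s) s := by
  have h : HasDerivAt (fun y : ℝ => 1 + Real.exp (-y)) (-Real.exp (-s)) s := by
    simpa using (((hasDerivAt_id s).neg).exp.const_add 1)
  have h2 := (h.log (one_add_exp_pos (-s)).ne').neg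
  convert h2 using 1
  iterate 3 rfl
  rw [Hbar, H]
  have h1 := (one_add_exp_pos (-s)).ne'
  field_simp
  ring
lemma int_Hbar (x : ℝ) : ∫ s in Ioi (-x), Hbar s = Real.log (1 + Real.exp x) := by
  have key := integral_Ioi_of_hasDerivAt_of_tendsto
    (f := fun s : ℝ => -Real.log (1 + Real.exp (-s))) (f' := Hbar) (a := -x) (m := 0)
    ((continuous_const.add continuous_neg.rexp).log
      (fun s => (one_add_exp_pos (-s)).ne')).neg.continuousWithinAt
    (fun s _ => hasDerivAt_G s) (integrableOn_Hbar (-x))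
    (by
      have h := ((Real.continuousAt_log (by norm_num : (1:ℝ) ≠ 0)).tendsto.comp
        tendsto_one_add_exp_neg).neg
      simpa using h)
  rw [key]; simp
lemma int_HHbar (x : ℝ) : ∫ s in Ioi (-x), H s * Hbar s = H x := by
  have key := integral_Ioi_of_hasDerivAt_of_tendsto
    (f := H) (f' := fun s => H s * Hbar s) (a := -x) (m := 1)
    continuous_H.continuousWithinAt (fun s _ => hasDerivAt_H s)
    (integrableOn_of_le (continuous_H.mul continuous_Hbar).measurable
      (fun s => mul_nonneg (H_pos s).le (Hbar_pos s).le)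
      (fun s => by simp only [Pi.mul_apply]; nlinarith [H_pos s, H_lt_one s, Hbar_pos s]) (-x))
    tendsto_H
  rw [key, H_neg']; ring
lemma int_H2Hbar (x : ℝ) : ∫ s in Ioi (-x), H s ^ 2 * Hbar s = (1 - H (-x) ^ 2) / 2 := by
  have hd : ∀ s : ℝ, HasDerivAt (fun y => H y ^ 2 / 2) (H s ^ 2 * Hbar s) s := by
    intro s
    have := ((hasDerivAt_H s).pow 2).div_const 2
    convert this using 1
    iterate 3 rfl
    ring
  have key := integral_Ioi_of_hasDerivAt_of_tendsto
    (f := fun y => H y ^ 2 / 2) (f' := fun s => H s ^ 2 * Hbar s) (a := -x) (m := 1/2)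
    ((continuous_H.pow 2).div_const 2).continuousWithinAt (fun s _ => hd s)
    (integrableOn_of_le ((continuous_H.pow 2).mul continuous_Hbar).measurable
      (fun s => mul_nonneg (by simp only [Pi.pow_apply]; positivity) (Hbar_pos s).le)
      (fun s => by
        have h1 : H s ^ 2 ≤ 1 := by nlinarith [H_pos s, H_lt_one s]
        simp only [Pi.mul_apply, Pi.pow_apply]; nlinarith [Hbar_pos s]) (-x))
    (by
      have := (tendsto_H.pow 2).div_const 2
      simpa using this)
  rw [key]; ring
lemma poly_bound {t : ℝ} (h0 : 0 ≤ t) (h1 : t ≤ 1) :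
    1 - Real.exp (-t) ≤ t - t ^ 2 / 6 := by
  have hb := Real.exp_bound (x := -t) (by rw [abs_neg, abs_of_nonneg h0]; exact h1)
    (n := 4) (by norm_num)
  rw [abs_neg, abs_of_nonneg h0] at hb
  simp [Finset.sum_range_succ] at hb
  rw [abs_le] at hb
  obtain ⟨hl, hr⟩ := hb
  norm_num [Nat.factorial] at hl hr
  nlinarith [pow_le_pow_left₀ h0 h1 3, pow_le_pow_left₀ h0 h1 4, sq_nonneg t,
    pow_le_pow_left₀ h0 h1 2]

lemma main_invariant (n : ℕ) :
    Measurable (fseq n) ∧ (∀ s, 0 ≤ fseq n s) ∧ (∀ s, fseq n s ≤ Hbar s) ∧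
      (∀ x, ∫ s in Ioi (-x), (Hbar s - fseq n s) ≤ 12 / ((n : ℝ) + 12) * H x) ∧
      (∀ x, Hbar x - fseq n x ≤ 12 / ((n : ℝ) + 11)) := by
  induction n with
  | zero =>
    refine ⟨by simp only [fseq]; exact measurable_Hbar.pow_const 2,
      fun s => by simp only [fseq]; positivity,
      fun s => by simp only [fseq]; nlinarith [Hbar_pos s, Hbar_lt_one s],
      fun x => ?_, fun x => ?_⟩
    · have hcong : ∫ s in Ioi (-x), (Hbar s - fseq 0 s) = ∫ s in Ioi (-x), H s * Hbar s := by
        apply setIntegral_congr_fun measurableSet_Ioi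
        intro s _
        simp only [fseq]; rw [Hbar]; ring
      rw [hcong, int_HHbar]
      norm_num
    · simp only [fseq]
      nlinarith [Hbar_pos x, Hbar_lt_one x]
  | succ n ih =>
    obtain ⟨ihm, ih0, ih1, ihJ, _⟩ := ih
    set c : ℝ := 12 / ((n : ℝ) + 12) with hc
    have hc0 : 0 < c := by positivity
    have hc1 : c ≤ 1 := by
      rw [hc, div_le_one (by positivity)]
      have : (0:ℝ) ≤ (n:ℝ) := Nat.cast_nonneg n
      linarith
    have hint : ∀ a : ℝ, IntegrableOn (fseq n) (Ioi a) := integrableOn_of_le ihm ih0 ih1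
    have hJint : ∀ a : ℝ, IntegrableOn (fun s => Hbar s - fseq n s) (Ioi a) :=
      fun a => (integrableOn_Hbar a).sub (hint a)
    -- J is nonnegative
    have hJ0 : ∀ x : ℝ, 0 ≤ ∫ s in Ioi (-x), (Hbar s - fseq n s) := by
      intro x
      apply setIntegral_nonneg measurableSet_Ioi
      intro s _
      linarith [ih1 s]
    -- key formula
    have hkey : ∀ x : ℝ,
        fseq (n + 1) x = Hbar x * Real.exp (-(∫ s in Ioi (-x), (Hbar s - fseq n s))) := by
      intro x
      have hsub : ∫ s in Ioi (-x), (Hbar s - fseq n s)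
          = (∫ s in Ioi (-x), Hbar s) - ∫ s in Ioi (-x), fseq n s :=
        integral_sub (integrableOn_Hbar (-x)) (hint (-x))
      have hA : Real.exp (∫ s in Ioi (-x), Hbar s) = 1 + Real.exp x := by
        rw [int_Hbar]; exact Real.exp_log (one_add_exp_pos x)
      simp only [fseq, T]
      rw [hsub, neg_sub, Real.exp_sub, hA, Hbar_eq]
      field_simp
    -- measurability
    have hg : Monotone (fun x : ℝ => ∫ s in Ioi (-x), fseq n s) := by
      intro x y hxy
      apply setIntegral_mono_set (hint (-y)) (Eventually.of_forall ih0)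
      exact HasSubset.Subset.eventuallyLE (Ioi_subset_Ioi (neg_le_neg hxy))
    have hmeas : Measurable (fseq (n + 1)) := by
      simp only [fseq, T]
      exact (measurable_Hbar.pow_const 2).mul (Real.measurable_exp.comp hg.measurable)
    -- nonneg
    have h0' : ∀ s, 0 ≤ fseq (n + 1) s := by
      intro s
      rw [hkey s]
      exact mul_nonneg (Hbar_pos s).le (Real.exp_pos _).le
    -- ≤ Hbar
    have h1' : ∀ s, fseq (n + 1) s ≤ Hbar s := by
      intro s
      rw [hkey s]
      have : Real.exp (-(∫ u in Ioi (-s), (Hbar u - fseq n u))) ≤ 1 := by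
        rw [Real.exp_le_one_iff]
        linarith [hJ0 s]
      nlinarith [Hbar_pos s]
    refine ⟨hmeas, h0', h1', fun x => ?_, fun x => ?_⟩
    · -- new J bound
      have hpt : ∀ s : ℝ, Hbar s - fseq (n + 1) s
          ≤ c * (H s * Hbar s) - c ^ 2 / 6 * (H s ^ 2 * Hbar s) := by
        intro s
        rw [hkey s]
        have ht0 : 0 ≤ c * H s := mul_nonneg hc0.le (H_pos s).le
        have ht1 : c * H s ≤ 1 := by
          nlinarith [H_pos s, H_lt_one s]
        have hp := poly_bound ht0 ht1
        have hmono : Real.exp (-(c * H s)) ≤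
            Real.exp (-(∫ u in Ioi (-s), (Hbar u - fseq n u))) := by
          apply Real.exp_le_exp.mpr
          simp only [neg_le_neg_iff]
          exact ihJ s
        have hfac : Hbar s - Hbar s * Real.exp (-(∫ u in Ioi (-s), (Hbar u - fseq n u)))
            ≤ Hbar s * (1 - Real.exp (-(c * H s))) := by
          have := Hbar_pos s
          nlinarith [hmono]
        calc Hbar s - Hbar s * Real.exp (-(∫ u in Ioi (-s), (Hbar u - fseq n u)))
            ≤ Hbar s * (1 - Real.exp (-(c * H s))) := hfac
          _ ≤ Hbar s * (c * H s - (c * H s) ^ 2 / 6) :=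
              mul_le_mul_of_nonneg_left hp (Hbar_pos s).le
          _ = c * (H s * Hbar s) - c ^ 2 / 6 * (H s ^ 2 * Hbar s) := by ring
      have hLHSint : IntegrableOn (fun s => Hbar s - fseq (n + 1) s) (Ioi (-x)) :=
        (integrableOn_Hbar (-x)).sub (integrableOn_of_le hmeas h0' h1' (-x))
      have hHHbar_int : IntegrableOn (fun s => H s * Hbar s) (Ioi (-x)) :=
        integrableOn_of_le (continuous_H.mul continuous_Hbar).measurable
          (fun s => mul_nonneg (H_pos s).le (Hbar_pos s).le)
          (fun s => by simp only [Pi.mul_apply]; nlinarith [H_pos s, H_lt_one s, Hbar_pos s]) (-x)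
      have hH2Hbar_int : IntegrableOn (fun s => H s ^ 2 * Hbar s) (Ioi (-x)) :=
        integrableOn_of_le ((continuous_H.pow 2).mul continuous_Hbar).measurable
          (fun s => mul_nonneg (by simp only [Pi.pow_apply]; positivity) (Hbar_pos s).le)
          (fun s => by
            have h1 : H s ^ 2 ≤ 1 := by nlinarith [H_pos s, H_lt_one s]
            simp only [Pi.mul_apply, Pi.pow_apply]; nlinarith [Hbar_pos s]) (-x)
      have hRHSint : IntegrableOn
          (fun s => c * (H s * Hbar s) - c ^ 2 / 6 * (H s ^ 2 * Hbar s)) (Ioi (-x)) :=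
        (hHHbar_int.const_mul c).sub (hH2Hbar_int.const_mul (c ^ 2 / 6))
      have hmono2 := setIntegral_mono_on hLHSint hRHSint measurableSet_Ioi
        (fun s _ => hpt s)
      have hval : ∫ s in Ioi (-x), (c * (H s * Hbar s) - c ^ 2 / 6 * (H s ^ 2 * Hbar s))
          = c * H x - c ^ 2 / 6 * ((1 - H (-x) ^ 2) / 2) := by
        rw [integral_sub (hHHbar_int.const_mul c) (hH2Hbar_int.const_mul (c ^ 2 / 6)),
          MeasureTheory.integral_const_mul, MeasureTheory.integral_const_mul, int_HHbar, int_H2Hbar]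
      rw [hval] at hmono2
      refine le_trans hmono2 ?_
      -- arithmetic
      have hHx0 := H_pos x
      have hHx1 := H_lt_one x
      have hHneg : H (-x) = 1 - H x := H_neg' x
      have hN : (12:ℝ) ≤ (n : ℝ) + 12 := by
        have : (0:ℝ) ≤ (n:ℝ) := Nat.cast_nonneg n
        linarith
      have hcc : c - c ^ 2 / 12 ≤ 12 / ((n : ℝ) + 13) := by
        have hN0 : (0:ℝ) < (n : ℝ) + 12 := by linarith
        have hN1 : (0:ℝ) < (n : ℝ) + 13 := by linarith
        have hdiff : 12 / ((n:ℝ) + 13) - (c - c ^ 2 / 12)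
            = 12 / (((n:ℝ) + 12) ^ 2 * ((n:ℝ) + 13)) := by
          rw [hc]; field_simp; ring
        have hpos : (0:ℝ) < 12 / (((n:ℝ) + 12) ^ 2 * ((n:ℝ) + 13)) := by positivity
        linarith
      have hpush : ((n + 1 : ℕ) : ℝ) + 12 = (n : ℝ) + 13 := by push_cast; ring
      rw [hpush]
      calc c * H x - c ^ 2 / 6 * ((1 - H (-x) ^ 2) / 2)
          ≤ (c - c ^ 2 / 12) * H x := by
            rw [hHneg]
            have hq : 0 ≤ c ^ 2 * (H x * (1 - H x)) :=
              mul_nonneg (sq_nonneg c) (mul_nonneg hHx0.le (by linarith))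
            nlinarith [hq]
        _ ≤ 12 / ((n : ℝ) + 13) * H x := mul_le_mul_of_nonneg_right hcc hHx0.le
    · -- pointwise bound
      rw [hkey x]
      have hJx := ihJ x
      have hJ0x := hJ0 x
      have hexp : 1 - Real.exp (-(∫ s in Ioi (-x), (Hbar s - fseq n s)))
          ≤ ∫ s in Ioi (-x), (Hbar s - fseq n s) := by
        nlinarith [Real.add_one_le_exp (-(∫ s in Ioi (-x), (Hbar s - fseq n s)))]
      have hHb1 := Hbar_lt_one x
      have hHb0 := Hbar_pos x
      have hcn : c ≤ 12 / ((n:ℝ) + 1 + 11) := by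
        rw [hc]
        push_cast
        apply div_le_div_of_nonneg_left (by norm_num) (by positivity)
        linarith
      have hd : Hbar x - Hbar x * Real.exp (-(∫ s in Ioi (-x), (Hbar s - fseq n s)))
          ≤ ∫ s in Ioi (-x), (Hbar s - fseq n s) := by
        nlinarith [Real.exp_pos (-(∫ s in Ioi (-x), (Hbar s - fseq n s))),
          Real.exp_le_one_iff.mpr (neg_nonpos.mpr hJ0x)]
      have : (∫ s in Ioi (-x), (Hbar s - fseq n s)) ≤ c := by
        calc (∫ s in Ioi (-x), (Hbar s - fseq n s)) ≤ c * H x := hJx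
          _ ≤ c * 1 := by nlinarith [H_lt_one x]
          _ = c := mul_one c
      push_cast
      linarith [hcn]


/-- With `f₀ := H̄²` and `f_n := T(f_{n−1})`, the sequence `f_n`
converges pointwise to `H̄`. -/
theorem stmt14 (x : ℝ) :
    Filter.Tendsto (fun n => fseq n x) Filter.atTop (nhds (Hbar x)) := by

  have hlow : ∀ n : ℕ, Hbar x - 12 / ((n : ℝ) + 11) ≤ fseq n x := by
    intro n
    have := (main_invariant n).2.2.2.2 x
    linarith
  have hup : ∀ n : ℕ, fseq n x ≤ Hbar x := fun n => (main_invariant n).2.2.1 x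
  have htend : Tendsto (fun n : ℕ => 12 / ((n : ℝ) + 11)) atTop (nhds 0) := by
    apply Tendsto.div_atTop tendsto_const_nhds
    exact tendsto_atTop_add_const_right _ 11 tendsto_natCast_atTop_atTop
  have hlowt : Tendsto (fun n : ℕ => Hbar x - 12 / ((n : ℝ) + 11)) atTop (nhds (Hbar x)) := by
    have h2 := (tendsto_const_nhds :
      Tendsto (fun _ : ℕ => Hbar x) atTop (nhds (Hbar x))).sub htend
    simpa using h2
  exact tendsto_of_tendsto_of_tendsto_of_le_of_le hlowt tendsto_const_nhds hlow hup
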